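/- Let L be a finite-dimensional Lie algebra over a field F with derived subalgebra L¹ = ⁅L, L⁆ and center Z(L). If dim Z(L) < dim L − 2·dim L¹, then the commuting graph Γ(L) is connected and diam(Γ(L)) = 2. -/

import Mathlib

/-- The commuting graph of a Lie algebra `L` over `F`: vertices are the elements of
`L` outside the center, and two distinct vertices are adjacent iff they commute. -/
def commutingGraph (F : Type*) [CommRing F] (L : Type*) [LieRing L] [LieAlgebra F L] :
    SimpleGraph {x : L // x ∉ LieAlgebra.center F L} where
  Adj x y := x ≠ y ∧ ⁅(x : L), (y : L)⁆ = 0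
  symm := ⟨fun x y h => ⟨h.1.symm, by rw [← lie_skew, h.2, neg_zero]⟩⟩
  loopless := ⟨fun x h => h.1 rfl⟩

section aux

variable (F : Type*) [Field F] (L : Type*) [LieRing L] [LieAlgebra F L] [Module.Finite F L]

lemma ker_ad_large (x : L) :
    Module.finrank F L ≤ Module.finrank F (LinearMap.ker (LieAlgebra.ad F L x)) +
      Module.finrank F (LieAlgebra.derivedSeries F L 1).toSubmodule := by
  have hrange : LinearMap.range (LieAlgebra.ad F L x) ≤
      (LieAlgebra.derivedSeries F L 1).toSubmodule := by
    rintro _ ⟨y, rfl⟩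
    have : ⁅x, y⁆ ∈ LieAlgebra.derivedSeries F L 1 := by
      rw [LieAlgebra.derivedSeries_def, LieAlgebra.derivedSeriesOfIdeal_succ,
        LieAlgebra.derivedSeriesOfIdeal_zero]
      exact LieSubmodule.lie_mem_lie (LieSubmodule.mem_top _) (LieSubmodule.mem_top _)
    simpa using this
  have h1 := LinearMap.finrank_range_add_finrank_ker (LieAlgebra.ad F L x)
  have h2 := Submodule.finrank_mono hrange
  omega

lemma common_commuter
    (hdim : Module.finrank F (LieAlgebra.center F L).toSubmodule <
      Module.finrank F L - 2 * Module.finrank F (LieAlgebra.derivedSeries F L 1).toSubmodule)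
    (x y : L) :
    ∃ w : L, w ∉ LieAlgebra.center F L ∧ ⁅x, w⁆ = 0 ∧ ⁅y, w⁆ = 0 := by
  have hx := ker_ad_large F L x
  have hy := ker_ad_large F L y
  set Kx := LinearMap.ker (LieAlgebra.ad F L x) with hKx
  set Ky := LinearMap.ker (LieAlgebra.ad F L y) with hKy
  have hsup := Submodule.finrank_sup_add_finrank_inf_eq Kx Ky
  have hle : Module.finrank F ↥(Kx ⊔ Ky) ≤ Module.finrank F L := Submodule.finrank_le _
  have hZlt : Module.finrank F (LieAlgebra.center F L).toSubmodule <
      Module.finrank F ↥(Kx ⊓ Ky) := by omega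
  by_contra hcon
  push_neg at hcon
  have hsub : Kx ⊓ Ky ≤ (LieAlgebra.center F L).toSubmodule := by
    rintro w ⟨hw1, hw2⟩
    by_contra hw
    have h1 : ⁅x, w⁆ = 0 := hw1
    have h2 : ⁅y, w⁆ = 0 := hw2
    exact hcon w hw h1 h2
  exact absurd (Submodule.finrank_mono hsub) (not_le.mpr hZlt)

end aux

/-- if `dim Z(L) < dim L - 2 ⬝ dim L¹`, then the commuting graph of `L` is
connected with diameter exactly 2. -/
theorem stmt11 (F : Type*) [Field F] (L : Type*) [LieRing L] [LieAlgebra F L]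
    [Module.Finite F L]
    (hdim : Module.finrank F (LieAlgebra.center F L).toSubmodule <
      Module.finrank F L - 2 * Module.finrank F (LieAlgebra.derivedSeries F L 1).toSubmodule) :
    (commutingGraph F L).Connected ∧ (commutingGraph F L).ediam = 2 := by
  -- there is a noncentral element
  have hne : ∃ x : L, x ∉ LieAlgebra.center F L := by
    by_contra h
    push_neg at h
    have htop : (LieAlgebra.center F L).toSubmodule = ⊤ := by
      rw [Submodule.eq_top_iff']
      intro x; exact h x
    rw [htop, finrank_top] at hdim
    omega
  obtain ⟨x0, hx0⟩ := hne
  -- a "second vertex" not commuting with a given noncentral element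
  have hnc : ∀ x : L, x ∉ LieAlgebra.center F L →
      ∃ y : L, y ∉ LieAlgebra.center F L ∧ ⁅x, y⁆ ≠ 0 := by
    intro x hx
    rw [LieModule.mem_maxTrivSubmodule] at hx
    push_neg at hx
    obtain ⟨y, hy⟩ := hx
    refine ⟨y, ?_, ?_⟩
    · intro hyc
      rw [LieModule.mem_maxTrivSubmodule] at hyc
      exact hy (by rw [← lie_skew, hyc x, neg_zero])
    · intro h
      exact hy (by rw [← lie_skew, h, neg_zero])
  haveI : Nonempty {x : L // x ∉ LieAlgebra.center F L} := ⟨⟨x0, hx0⟩⟩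
  -- common neighbor for any two vertices
  have hmid : ∀ u v : {x : L // x ∉ LieAlgebra.center F L},
      ¬ (commutingGraph F L).Adj u v → u ≠ v →
      ∃ w, (commutingGraph F L).Adj u w ∧ (commutingGraph F L).Adj w v := by
    intro u v hadj huv
    have hlie : ⁅(u : L), (v : L)⁆ ≠ 0 := by
      intro h
      exact hadj ⟨huv, h⟩
    obtain ⟨w, hw, hwu, hwv⟩ := common_commuter F L hdim u.1 v.1
    refine ⟨⟨w, hw⟩, ⟨?_, hwu⟩, ⟨?_, ?_⟩⟩
    · intro h
      apply hlie
      have h' : (u : L) = w := congrArg Subtype.val h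
      rw [h', ← lie_skew, hwv, neg_zero]
    · intro h
      apply hlie
      have : w = (v : L) := congrArg Subtype.val h
      rw [← this]; exact hwu
    · rw [← lie_skew, hwv, neg_zero]
  -- preconnectedness
  have hpre : (commutingGraph F L).Preconnected := by
    intro u v
    by_cases huv : u = v
    · subst huv; exact SimpleGraph.Reachable.refl u
    by_cases hadj : (commutingGraph F L).Adj u v
    · exact hadj.reachable
    · obtain ⟨w, h1, h2⟩ := hmid u v hadj huv
      exact h1.reachable.trans h2.reachable
  have hconn : (commutingGraph F L).Connected := ⟨hpre⟩
  refine ⟨hconn, le_antisymm ?_ ?_⟩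
  · -- ediam ≤ 2
    rw [SimpleGraph.ediam_le_iff]
    intro u v
    by_cases huv : u = v
    · subst huv; simp [SimpleGraph.edist_self]
    by_cases hadj : (commutingGraph F L).Adj u v
    · calc (commutingGraph F L).edist u v = 1 := SimpleGraph.edist_eq_one_iff_adj.mpr hadj
        _ ≤ 2 := by norm_num
    · obtain ⟨w, h1, h2⟩ := hmid u v hadj huv
      have := SimpleGraph.edist_le (SimpleGraph.Walk.cons h1
          (SimpleGraph.Walk.cons h2 SimpleGraph.Walk.nil))
      simpa using this
  · -- 2 ≤ ediam : find nonadjacent distinct pair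
    obtain ⟨y0, hy0, hxy0⟩ := hnc x0 hx0
    set u : {x : L // x ∉ LieAlgebra.center F L} := ⟨x0, hx0⟩
    set v : {x : L // x ∉ LieAlgebra.center F L} := ⟨y0, hy0⟩
    have huv : u ≠ v := by
      intro h
      apply hxy0
      have : x0 = y0 := congrArg Subtype.val h
      rw [this]; exact lie_self y0
    have hadj : ¬ (commutingGraph F L).Adj u v := by
      rintro ⟨-, h⟩
      exact hxy0 h
    have h0 : (commutingGraph F L).edist u v ≠ 0 :=
      fun h => huv (SimpleGraph.edist_eq_zero_iff.mp h)
    have h1 : (commutingGraph F L).edist u v ≠ 1 :=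
      fun h => hadj (SimpleGraph.edist_eq_one_iff_adj.mp h)
    have h2 : 2 ≤ (commutingGraph F L).edist u v := by
      have hpos : 1 ≤ (commutingGraph F L).edist u v :=
        Order.one_le_iff_pos.mpr (pos_iff_ne_zero.mpr h0)
      have : (1 : ℕ∞) < (commutingGraph F L).edist u v := lt_of_le_of_ne hpos (Ne.symm h1)
      have h2' := Order.add_one_le_of_lt this
      exact le_trans (by norm_num) h2'
    exact h2.trans SimpleGraph.edist_le_ediam
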